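/- Let x : ℝ → ℝ^n be a solution of the Lotka-Volterra system x_i' = x_i · (Σ_j A_{ij} x_j). For any two indices u ≠ v such that A_{u,w} = A_{v,w} for all w ∉ {u,v}, the function P = (A_{v,u} − A_{u,u})·x_u + (A_{v,v} − A_{u,v})·x_v satisfies P' = P · (A_{u,u}·x_u + A_{v,v}·x_v + Σ_{w∉{u,v}} A_{u,w}·x_w), i.e., P is a Darboux polynomial along the flow. -/

import Mathlib

open Finset

/-- Darboux polynomial for a Lotka-Volterra system: if `x` solves
`x_i' = x_i (Σ_j A_{ij} x_j)` and rows `u ≠ v` of `A` agree outside columns `u, v`,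
then `P = (A v u − A u u) x_u + (A v v − A u v) x_v` satisfies
`P' = P (A u u·x_u + A v v·x_v + Σ_{w ∉ {u,v}} A u w·x_w)`. -/
theorem darboux_polynomial_LV {n : ℕ} (A : Matrix (Fin n) (Fin n) ℝ)
    (x : ℝ → Fin n → ℝ)
    (hx : ∀ i t, HasDerivAt (fun s => x s i) (x t i * ∑ j, A i j * x t j) t)
    (u v : Fin n) (huv : u ≠ v)
    (hrow : ∀ w, w ≠ u → w ≠ v → A u w = A v w) (t : ℝ) :
    HasDerivAt (fun s => (A v u - A u u) * x s u + (A v v - A u v) * x s v)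
      (((A v u - A u u) * x t u + (A v v - A u v) * x t v) *
        (A u u * x t u + A v v * x t v + ∑ w ∈ ({u, v}ᶜ : Finset (Fin n)), A u w * x t w))
      t := by
  have hsplit : ∀ i, ∑ j, A i j * x t j =
      A i u * x t u + A i v * x t v + ∑ w ∈ ({u, v}ᶜ : Finset (Fin n)), A i w * x t w := by
    intro i
    rw [← Finset.sum_add_sum_compl ({u, v} : Finset (Fin n)), Finset.sum_pair huv]
  have hS : ∑ w ∈ ({u, v}ᶜ : Finset (Fin n)), A v w * x t w
      = ∑ w ∈ ({u, v}ᶜ : Finset (Fin n)), A u w * x t w := by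
    refine Finset.sum_congr rfl fun w hw => ?_
    simp only [Finset.mem_compl, Finset.mem_insert, Finset.mem_singleton, not_or] at hw
    rw [hrow w hw.1 hw.2]
  have h := ((hx u t).const_mul (A v u - A u u)).add ((hx v t).const_mul (A v v - A u v))
  refine h.congr_deriv ?_
  rw [hsplit u, hsplit v, hS]
  ring
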